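/- arXiv:1904.10783 — 7 statements merged into one kernel-verified Lean document; each statement's English description precedes it below -/
import Mathlib

section
/- If A and B are square matrices of the same size with AB = BA, then A^D B = B A^D and A B^D = B^D A. -/
def IsDrazinInverse {n : Type*} [Fintype n] [DecidableEq n]
    (A X : Matrix n n ℂ) (k : ℕ) : Prop :=
  A ^ (k + 1) * X = A ^ k ∧ X * A * X = X ∧ A * X = X * A

def HasIndex {n : Type*} [Fintype n] [DecidableEq n]
    (A : Matrix n n ℂ) (k : ℕ) : Prop :=
  LinearMap.range (Matrix.mulVecLin (A ^ k)) = LinearMap.range (Matrix.mulVecLin (A ^ (k + 1))) ∧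
  ∀ j < k, LinearMap.range (Matrix.mulVecLin (A ^ j)) ≠ LinearMap.range (Matrix.mulVecLin (A ^ (j + 1)))

lemma drazin_comm_aux {R : Type*} [Ring R] (a x c : R) (k : ℕ)
    (h1 : a ^ (k + 1) * x = a ^ k) (h2 : x * a * x = x) (h3 : a * x = x * a)
    (hc : a * c = c * a) : x * c = c * x := by
  have hxa : Commute x a := h3.symm
  have hac : Commute a c := hc
  set m := k + 1 with hm
  have hidem : (x * a) * (x * a) = x * a := by
    rw [← mul_assoc, h2]
  have hpow : ∀ j, (x * a) ^ (j + 1) = x * a := by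
    intro j
    induction j with
    | zero => rw [pow_one]
    | succ n ih => rw [pow_succ, ih, hidem]
  have hx1 : ∀ j, x * (x * a) ^ j = x := by
    intro j
    induction j with
    | zero => rw [pow_zero, mul_one]
    | succ n ih => rw [pow_succ, ← mul_assoc, ih, ← h3, ← mul_assoc, h2]
  have hx2 : ∀ j, (x * a) ^ j * x = x := by
    intro j
    induction j with
    | zero => rw [pow_zero, one_mul]
    | succ n ih => rw [pow_succ', mul_assoc, ih, h2]
  have key1 : ∀ j, x ^ (j + 1) * a ^ j = x := by
    intro j
    rw [pow_succ', mul_assoc, ← hxa.mul_pow, hx1]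
  have key2 : ∀ j, a ^ j * x ^ (j + 1) = x := by
    intro j
    rw [pow_succ, ← mul_assoc, ← hxa.symm.mul_pow, h3, hx2]
  have key3 : a ^ (m + 1) * x = a ^ m := by
    rw [hm, pow_succ', mul_assoc, h1, ← pow_succ']
  have key4 : x * a ^ (m + 1) = a ^ m := by
    rw [← (hxa.symm.pow_left (m + 1)).eq, key3]
  have hcp : ∀ j, a ^ j * c = c * a ^ j := fun j => (hac.pow_left j).eq
  have left : x * c = x * a * c * x := by
    conv_lhs => rw [← key1 m]
    rw [mul_assoc, hcp m, ← key3, ← mul_assoc c, ← hcp (m + 1), ← mul_assoc, ← mul_assoc,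
      ← hxa.mul_pow, hpow]
  have right : c * x = x * a * c * x := by
    conv_lhs => rw [← key2 m]
    rw [← mul_assoc, ← hcp m, ← key4, mul_assoc x (a ^ (m + 1)) c, hcp (m + 1),
      ← mul_assoc x c, mul_assoc (x * c), ← hxa.symm.mul_pow, h3, hpow, ← h3,
      ← mul_assoc, mul_assoc x c a, ← hc, ← mul_assoc, h3]
  rw [left, right]

theorem drazin_commute {n : Type*} [Fintype n] [DecidableEq n]
    (A B X Y : Matrix n n ℂ) (k : ℕ)
    (hAB : A * B = B * A)
    (hX : IsDrazinInverse A X k) (hY : IsDrazinInverse B Y k) :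
    X * B = B * X ∧ A * Y = Y * A := by
  exact ⟨drazin_comm_aux A X B k hX.1 hX.2.1 hX.2.2 hAB,
    (drazin_comm_aux B Y A k hY.1 hY.2.1 hY.2.2 hAB.symm).symm⟩
end

section
/- If AB = BA, then (AB)^D = B^D A^D = A^D B^D. -/
/-- In any ring, an element commuting with `a` commutes with any Drazin inverse of `a`. -/
lemma drazin_double_commute {R : Type*} [Ring R] (a d x : R) (k : ℕ)
    (h1 : a ^ (k + 1) * d = a ^ k) (h2 : d * a * d = d) (h3 : a * d = d * a)
    (hx : a * x = x * a) : d * x = x * d := by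
  obtain ⟨e, he⟩ : ∃ e, e = a * d := ⟨_, rfl⟩
  have cad : Commute a d := h3
  have cax : Commute a x := hx
  have cae : Commute a e := he ▸ (Commute.refl a).mul_right cad
  have c1e : Commute a (1 - e) := (Commute.one_right a).sub_right cae
  have hde : d * e = d := by rw [he, ← mul_assoc]; exact h2
  have hed : e * d = d := by rw [he, h3]; exact h2
  have hee : e * e = e := by rw [he, mul_assoc a d (a*d), ← mul_assoc d a d, h2]
  have hake : a ^ k * e = a ^ k := by rw [he, ← mul_assoc, ← pow_succ, h1]
  have heak : e * a ^ k = a ^ k := by rw [(cae.symm.pow_right k).eq, hake]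
  have h1ek : (1 - e) * a ^ k = 0 := by rw [sub_mul, one_mul, heak, sub_self]
  have hak1e : a ^ k * (1 - e) = 0 := by rw [mul_sub, mul_one, hake, sub_self]
  have key : ∀ u : R, a * u = u * a → e * u = u → u = d * u * a := by
    intro u hau heu
    conv_lhs => rw [← heu]
    rw [he, h3, mul_assoc, hau, ← mul_assoc]
  have key' : ∀ v : R, a * v = v * a → v * e = v → v = a * v * d := by
    intro v hav hve
    conv_lhs => rw [← hve]
    rw [he, ← mul_assoc, ← hav]
  -- u := e * x * (1 - e) is zero
  have cau : Commute a (e * x * (1 - e)) := (cae.mul_right cax).mul_right c1e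
  have hu1 : e * x * (1 - e) = d * (e * x * (1 - e)) * a :=
    key _ cau.eq (by rw [← mul_assoc, ← mul_assoc, hee])
  have hum : ∀ m, e * x * (1 - e) = d ^ m * (e * x * (1 - e)) * a ^ m := by
    intro m
    induction m with
    | zero => simp
    | succ m ih =>
      calc e * x * (1 - e) = d ^ m * (e * x * (1 - e)) * a ^ m := ih
        _ = d ^ m * (d * (e * x * (1 - e)) * a) * a ^ m := by rw [← hu1]
        _ = d ^ (m + 1) * (e * x * (1 - e)) * a ^ (m + 1) := by
            rw [pow_succ d, pow_succ' a]; simp only [mul_assoc]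
  have hu0 : e * x * (1 - e) = 0 := by
    have h := hum k
    rwa [mul_assoc (d ^ k) (e * x * (1 - e)) (a ^ k), mul_assoc (e * x) (1 - e) (a ^ k), h1ek, mul_zero, mul_zero] at h
  -- v := (1 - e) * x * e is zero
  have cav : Commute a ((1 - e) * x * e) := (c1e.mul_right cax).mul_right cae
  have hv1 : (1 - e) * x * e = a * ((1 - e) * x * e) * d :=
    key' _ cav.eq (by rw [mul_assoc, hee])
  have hvm : ∀ m, (1 - e) * x * e = a ^ m * ((1 - e) * x * e) * d ^ m := by
    intro m
    induction m with
    | zero => simp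
    | succ m ih =>
      calc (1 - e) * x * e = a ^ m * ((1 - e) * x * e) * d ^ m := ih
        _ = a ^ m * (a * ((1 - e) * x * e) * d) * d ^ m := by rw [← hv1]
        _ = a ^ (m + 1) * ((1 - e) * x * e) * d ^ (m + 1) := by
            rw [pow_succ a, pow_succ' d]; simp only [mul_assoc]
  have hv0 : (1 - e) * x * e = 0 := by
    have h := hvm k
    rwa [← mul_assoc, ← mul_assoc, hak1e, zero_mul, zero_mul, zero_mul] at h
  have hexe : e * x = e * x * e := by
    rw [mul_sub, mul_one, sub_eq_zero] at hu0; exact hu0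
  have hxee : x * e = e * x * e := by
    rw [sub_mul, sub_mul, one_mul, sub_eq_zero] at hv0; exact hv0
  have hex : e * x = x * e := hexe.trans hxee.symm
  calc d * x = d * (e * x) := by rw [← mul_assoc, hde]
    _ = d * (x * e) := by rw [hex]
    _ = d * x * (a * d) := by rw [← he, mul_assoc d x e]
    _ = d * (x * a) * d := by rw [← mul_assoc, mul_assoc d x a]
    _ = d * (a * x) * d := by rw [← hx]
    _ = e * x * d := by rw [← mul_assoc d a x, ← h3, ← he]
    _ = x * e * d := by rw [hex]
    _ = x * d := by rw [mul_assoc, hed]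

theorem drazin_mul_of_commute {n : Type*} [Fintype n] [DecidableEq n]
    (A B X Y : Matrix n n ℂ) (k : ℕ)
    (hAB : A * B = B * A)
    (hX : IsDrazinInverse A X k) (hY : IsDrazinInverse B Y k) :
    IsDrazinInverse (A * B) (Y * X) k ∧ Y * X = X * Y := by
  obtain ⟨hX1, hX2, hX3⟩ := hX
  obtain ⟨hY1, hY2, hY3⟩ := hY
  have cXB : X * B = B * X := drazin_double_commute A X B k hX1 hX2 hX3 hAB
  have cYA : Y * A = A * Y := drazin_double_commute B Y A k hY1 hY2 hY3 hAB.symm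
  have cYX : Y * X = X * Y := drazin_double_commute B Y X k hY1 hY2 hY3 cXB.symm
  have cAB : Commute A B := hAB
  have cAX : Commute A X := hX3
  have cBY : Commute B Y := hY3
  have cBX : Commute B X := cXB.symm
  have cAY : Commute A Y := cYA.symm
  have cXY : Commute X Y := cYX.symm
  refine ⟨⟨?_, ?_, ?_⟩, cYX⟩
  · rw [cAB.mul_pow, cAB.mul_pow, mul_assoc, ← mul_assoc (B ^ (k + 1)) Y X, hY1,
      (cBX.pow_left k).eq, ← mul_assoc, hX1]
  · have hsort : (Y * X) * (A * B) * (Y * X) = (Y * (B * Y)) * (X * (A * X)) := by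
      simp only [mul_assoc, cAB.symm.eq, cAX.symm.eq, cAY.symm.eq, cBX.symm.eq,
        cBY.symm.eq, cXY.symm.eq, cAB.symm.left_comm, cAX.symm.left_comm,
        cAY.symm.left_comm, cBX.symm.left_comm, cBY.symm.left_comm, cXY.symm.left_comm]
    rw [hsort, ← mul_assoc Y B Y, hY2, ← mul_assoc X A X, hX2]
  · exact ((cAY.mul_right cAX).mul_left (cBY.mul_right cBX)).eq
end

section
/- For square matrices A and B of the same size, (AB)^D = A ((BA)^2)^D B. -/
section ClineAux

variable {R : Type*} [Ring R]

private lemma cline_e1 (a z : R) (hzz : a * (z * z) = z) :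
    ∀ m : ℕ, a ^ m * z ^ (m + 1) = z := by
  intro m
  induction m with
  | zero => simp
  | succ m ih =>
    calc a ^ (m + 1) * z ^ (m + 1 + 1)
        = a * (a ^ m * z ^ (m + 1) * z) := by
          rw [pow_succ' a, pow_succ z]
          simp only [mul_assoc]
      _ = z := by rw [ih]; exact hzz

private lemma cline_comm (a z s : R) (k : ℕ)
    (h1 : a ^ (k + 1) * z = a ^ k) (h2 : z * a * z = z) (h3 : a * z = z * a)
    (hs : a * s = s * a) : z * s = s * z := by
  have haz : Commute a z := h3
  have has : Commute a s := hs
  have hzz : a * (z * z) = z := by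
    calc a * (z * z) = z * a * z := by rw [← mul_assoc, h3]
      _ = z := h2
  have e1 : ∀ m : ℕ, a ^ m * z ^ (m + 1) = z := cline_e1 a z hzz
  have step : a ^ (k + 2) * z = a ^ (k + 1) := by
    calc a ^ (k + 2) * z = a * (a ^ (k + 1) * z) := by
          rw [pow_succ' a (k + 1), mul_assoc]
      _ = a * a ^ k := by rw [h1]
      _ = a ^ (k + 1) := (pow_succ' a k).symm
  have e2 : ∀ j : ℕ, a ^ (k + 1 + j) * z ^ j = a ^ (k + 1) := by
    intro j
    induction j with
    | zero => simp
    | succ j ih =>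
      calc a ^ (k + 1 + (j + 1)) * z ^ (j + 1)
          = a ^ j * (a ^ (k + 2) * z) * z ^ j := by
            rw [show k + 1 + (j + 1) = j + (k + 2) by ring, pow_add, pow_succ' z j]
            simp only [mul_assoc]
        _ = a ^ (k + 1 + j) * z ^ j := by
            rw [step, ← pow_add, add_comm j (k + 1)]
        _ = a ^ (k + 1) := ih
  -- fact: z^(k+2) * a^(2k+2) = a^k
  have key : a ^ (2 * k + 2) * z ^ (k + 2) = a ^ k := by
    calc a ^ (2 * k + 2) * z ^ (k + 2)
        = a ^ (k + 1) * (a ^ (k + 1) * z ^ (k + 2)) := by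
          rw [show 2 * k + 2 = (k + 1) + (k + 1) by ring, pow_add, mul_assoc]
      _ = a ^ (k + 1) * z := by rw [e1 (k + 1)]
      _ = a ^ k := h1
  calc z * s = a ^ (k + 1) * z ^ (k + 2) * s := by rw [e1 (k + 1)]
    _ = z ^ (k + 2) * a ^ (k + 1) * s := by rw [(haz.pow_pow (k + 1) (k + 2)).eq]
    _ = z ^ (k + 2) * (s * a ^ (k + 1)) := by
        rw [mul_assoc, ((has.pow_left (k + 1)).eq : a ^ (k+1) * s = s * a ^ (k+1))]
    _ = z ^ (k + 2) * (s * (a ^ (2 * k + 2) * z ^ (k + 1))) := by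
        rw [show (2 * k + 2) = k + 1 + (k + 1) by ring, e2 (k + 1)]
    _ = z ^ (k + 2) * (a ^ (2 * k + 2) * (s * z ^ (k + 1))) := by
        rw [← mul_assoc s, ((has.pow_left (2 * k + 2)).eq).symm, mul_assoc]
    _ = a ^ (2 * k + 2) * z ^ (k + 2) * (s * z ^ (k + 1)) := by
        rw [mul_assoc, ← mul_assoc (z ^ (k + 2)), ((haz.pow_pow (2 * k + 2) (k + 2)).eq).symm,
          mul_assoc]
    _ = a ^ k * (s * z ^ (k + 1)) := by rw [key]
    _ = s * (a ^ k * z ^ (k + 1)) := by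
        rw [← mul_assoc, ((has.pow_left k).eq : a ^ k * s = s * a ^ k), mul_assoc]
    _ = s * z := by rw [e1 k]

private lemma cline_pow (A B : R) : ∀ j : ℕ, (A * B) ^ (j + 1) = A * ((B * A) ^ j * B) := by
  intro j
  induction j with
  | zero => simp
  | succ j ih =>
    calc (A * B) ^ (j + 1 + 1) = (A * B) ^ (j + 1) * (A * B) := pow_succ _ _
      _ = A * ((B * A) ^ j * B) * (A * B) := by rw [ih]
      _ = A * ((B * A) ^ (j + 1) * B) := by
          rw [pow_succ (B * A) j]
          simp only [mul_assoc]

end ClineAux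

theorem drazin_mul_cline {n : Type*} [Fintype n] [DecidableEq n]
    (A B Z : Matrix n n ℂ) (k : ℕ)
    (hZ : IsDrazinInverse ((B * A) ^ 2) Z k) :
    ∃ m, IsDrazinInverse (A * B) (A * Z * B) m := by
  obtain ⟨h1, h2, h3⟩ := hZ
  have hcomm : Z * (B * A) = (B * A) * Z :=
    cline_comm ((B * A) ^ 2) Z (B * A) k h1 h2 h3 ((Commute.pow_left rfl 2).eq)
  refine ⟨2 * k + 1, ?_, ?_, ?_⟩
  · -- (A*B)^(2k+2) * (A*Z*B) = (A*B)^(2k+1)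
    calc (A * B) ^ (2 * k + 1 + 1) * (A * Z * B)
        = A * ((B * A) ^ (2 * k + 1) * B) * (A * Z * B) := by rw [cline_pow]
      _ = A * ((B * A) ^ (2 * k + 1) * (B * A) * Z * B) := by simp only [mul_assoc]
      _ = A * (((B * A) ^ 2) ^ (k + 1) * Z * B) := by
          rw [← pow_succ, show 2 * k + 1 + 1 = 2 * (k + 1) by ring, pow_mul]
      _ = A * (((B * A) ^ 2) ^ k * B) := by rw [h1]
      _ = A * ((B * A) ^ (2 * k) * B) := by rw [← pow_mul]
      _ = (A * B) ^ (2 * k + 1) := (cline_pow A B (2 * k)).symm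
  · -- (A*Z*B) * (A*B) * (A*Z*B) = A*Z*B
    calc A * Z * B * (A * B) * (A * Z * B)
        = A * (Z * (B * A) ^ 2 * Z) * B := by
          rw [sq]
          simp only [mul_assoc]
      _ = A * Z * B := by rw [h2, mul_assoc]
  · -- commute
    calc A * B * (A * Z * B) = A * ((B * A) * Z) * B := by simp only [mul_assoc]
      _ = A * (Z * (B * A)) * B := by rw [← hcomm]
      _ = A * Z * B * (A * B) := by simp only [mul_assoc]
end

section
/- If AB = BA = 0, then (A + B)^D = A^D + B^D and (A − B)^D = A^D − B^D. -/
section aux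
variable {n : Type*} [Fintype n] [DecidableEq n]

lemma drazin_aux_right (A B X : Matrix n n ℂ)
    (hX2 : X * A * X = X) (hX3 : A * X = X * A) (hAB : A * B = 0) : X * B = 0 := by
  have h1 : X * B = X * X * (A * B) := by
    conv_lhs => rw [← hX2]
    rw [mul_assoc X A X, hX3]
    simp [mul_assoc]
  rw [h1, hAB, mul_zero]

lemma drazin_aux_left (A B X : Matrix n n ℂ)
    (hX2 : X * A * X = X) (hX3 : A * X = X * A) (hBA : B * A = 0) : B * X = 0 := by
  have h1 : B * X = B * A * (X * X) := by
    conv_lhs => rw [← hX2]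
    rw [← hX3]
    simp [mul_assoc]
  rw [h1, hBA, zero_mul]

lemma pow_succ_mul_eq_zero (A B : Matrix n n ℂ) (hAB : A * B = 0) (m : ℕ) :
    A ^ (m + 1) * B = 0 := by
  rw [pow_succ, mul_assoc, hAB, mul_zero]

lemma add_pow_of_mul_zero (A B : Matrix n n ℂ) (hAB : A * B = 0) (hBA : B * A = 0) (m : ℕ) :
    (A + B) ^ (m + 1) = A ^ (m + 1) + B ^ (m + 1) := by
  induction m with
  | zero => simp
  | succ m ih =>
    rw [pow_succ, ih, add_mul, mul_add, mul_add, pow_succ_mul_eq_zero A B hAB,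
      pow_succ_mul_eq_zero B A hBA, ← pow_succ, ← pow_succ]
    abel

lemma drazin_add (A B X Y : Matrix n n ℂ) (k : ℕ)
    (hAB : A * B = 0) (hBA : B * A = 0)
    (hX : IsDrazinInverse A X k) (hY : IsDrazinInverse B Y k) :
    IsDrazinInverse (A + B) (X + Y) k := by
  obtain ⟨hX1, hX2, hX3⟩ := hX
  obtain ⟨hY1, hY2, hY3⟩ := hY
  have hXB : X * B = 0 := drazin_aux_right A B X hX2 hX3 hAB
  have hYA : Y * A = 0 := drazin_aux_right B A Y hY2 hY3 hBA
  have hBX : B * X = 0 := drazin_aux_left A B X hX2 hX3 hBA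
  have hAY : A * Y = 0 := drazin_aux_left B A Y hY2 hY3 hAB
  have hcomm : (A + B) * (X + Y) = (X + Y) * (A + B) := by
    simp only [mul_add, add_mul, hXB, hYA, hBX, hAY, hX3, hY3]
  have hmid : (X + Y) * (A + B) * (X + Y) = X + Y := by
    have h1 : (X + Y) * (A + B) = X * A + Y * B := by
      simp only [add_mul, mul_add, hXB, hYA]
      abel
    rw [h1, add_mul, mul_add, mul_add, hX2, mul_assoc X A Y, hAY, mul_zero,
      mul_assoc Y B X, hBX, mul_zero, hY2]
    abel
  refine ⟨?_, hmid, hcomm⟩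
  cases k with
  | zero =>
    have hAX1 : A * X = 1 := by simpa using hX1
    have hB0 : B = 0 := by
      have : X * (A * B) = B := by rw [← mul_assoc, ← hX3, hAX1, one_mul]
      rw [← this, hAB, mul_zero]
    have hY0 : Y = 0 := by
      rw [hB0] at hY2
      simpa using hY2.symm
    rw [hB0, hY0, add_zero, add_zero]
    simpa using hX1
  | succ m =>
    rw [add_pow_of_mul_zero A B hAB hBA, add_mul, mul_add, mul_add,
      pow_succ_mul_eq_zero A Y hAY, pow_succ_mul_eq_zero B X hBX, add_zero, zero_add,
      hX1, hY1, add_pow_of_mul_zero A B hAB hBA]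

lemma drazin_neg (B Y : Matrix n n ℂ) (k : ℕ)
    (hY : IsDrazinInverse B Y k) : IsDrazinInverse (-B) (-Y) k := by
  obtain ⟨h1, h2, h3⟩ := hY
  refine ⟨?_, by simp [h2], by simp [h3]⟩
  rcases Nat.even_or_odd k with hk | hk
  · rw [hk.neg_pow, (hk.add_one).neg_pow, neg_mul_neg, h1]
  · rw [hk.neg_pow, (hk.add_one).neg_pow, mul_neg, h1]

end aux

theorem drazin_add_sub {n : Type*} [Fintype n] [DecidableEq n]
    (A B X Y : Matrix n n ℂ) (k : ℕ)
    (hAB : A * B = 0) (hBA : B * A = 0)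
    (hX : IsDrazinInverse A X k) (hY : IsDrazinInverse B Y k) :
    IsDrazinInverse (A + B) (X + Y) k ∧ IsDrazinInverse (A - B) (X - Y) k := by
  refine ⟨drazin_add A B X Y k hAB hBA hX hY, ?_⟩
  have h := drazin_add A (-B) X (-Y) k (by simp [hAB]) (by simp [hBA]) hX
    (drazin_neg B Y k hY)
  rw [sub_eq_add_neg, sub_eq_add_neg]
  exact h
end

section
/- If A and B are group invertible and AB = 0, then (A+B)^# = (I − B B^#) A^# + B^# (I − A A^#). -/
def IsGroupInverse {n : Type*} [Fintype n] [DecidableEq n]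
    (A X : Matrix n n ℂ) : Prop :=
  A * X * A = A ∧ X * A * X = X ∧ A * X = X * A

theorem group_inverse_add {n : Type*} [Fintype n] [DecidableEq n]
    (A B X Y : Matrix n n ℂ)
    (hA : IsGroupInverse A X) (hB : IsGroupInverse B Y)
    (hAB : A * B = 0) :
    IsGroupInverse (A + B) ((1 - B * Y) * X + Y * (1 - A * X)) := by
  obtain ⟨hA1, hA2, hA3⟩ := hA
  obtain ⟨hB1, hB2, hB3⟩ := hB
  -- commutation rules
  have rXA : ∀ t, X * (A * t) = A * (X * t) := by
    intro t; rw [← mul_assoc, ← hA3, mul_assoc]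
  have rYB : ∀ t, Y * (B * t) = B * (Y * t) := by
    intro t; rw [← mul_assoc, ← hB3, mul_assoc]
  have bXA : X * A = A * X := hA3.symm
  have bYB : Y * B = B * Y := hB3.symm
  -- A*A*X = A
  have bAAX : A * (A * X) = A := by rw [hA3, ← mul_assoc, hA1]
  have rAAX : ∀ t, A * (A * (X * t)) = A * t := by
    intro t; rw [← mul_assoc, ← mul_assoc, mul_assoc A A X, bAAX]
  have bBBY : B * (B * Y) = B := by rw [hB3, ← mul_assoc, hB1]
  have rBBY : ∀ t, B * (B * (Y * t)) = B * t := by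
    intro t; rw [← mul_assoc, ← mul_assoc, mul_assoc B B Y, bBBY]
  -- A*X*X = X
  have bAXX : A * (X * X) = X := by rw [← mul_assoc, hA3, hA2]
  have rAXX : ∀ t, A * (X * (X * t)) = X * t := by
    intro t; rw [← mul_assoc, ← mul_assoc, mul_assoc A X X, bAXX]
  have bBYY : B * (Y * Y) = Y := by rw [← mul_assoc, hB3, hB2]
  have rBYY : ∀ t, B * (Y * (Y * t)) = Y * t := by
    intro t; rw [← mul_assoc, ← mul_assoc, mul_assoc B Y Y, bBYY]
  -- X*X*A = X
  have hXXA : X * (X * A) = X := by rw [← hA3, ← mul_assoc, hA2]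
  -- derived zeros
  have bXB : X * B = 0 := by
    rw [← hXXA, mul_assoc, mul_assoc, hAB, mul_zero, mul_zero]
  have rXB : ∀ t, X * (B * t) = 0 := by
    intro t; rw [← mul_assoc, bXB, zero_mul]
  have bAY : A * Y = 0 := by
    rw [← bBYY, ← mul_assoc, ← mul_assoc, hAB, zero_mul, zero_mul]
  have rAY : ∀ t, A * (Y * t) = 0 := by
    intro t; rw [← mul_assoc, bAY, zero_mul]
  have bXY : X * Y = 0 := by
    rw [← hXXA, mul_assoc, mul_assoc, bAY, mul_zero, mul_zero]
  have rXY : ∀ t, X * (Y * t) = 0 := by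
    intro t; rw [← mul_assoc, bXY, zero_mul]
  have rAB : ∀ t, A * (B * t) = 0 := by
    intro t; rw [← mul_assoc, hAB, zero_mul]
  refine ⟨?_, ?_, ?_⟩ <;>
  · simp only [add_mul, mul_add, sub_mul, mul_sub, mul_one, one_mul, mul_assoc,
      rXA, bXA, rYB, bYB, rAAX, bAAX, rBBY, bBBY, rAXX, bAXX, rBYY, bBYY,
      rXB, bXB, rAY, bAY, rXY, bXY, rAB, hAB, mul_zero, zero_mul, sub_zero,
      zero_sub, add_zero, zero_add]
    abel
end

section
/- The Drazin inverse can be computed via the Moore–Penrose inverse: A^D = A^k (A^(2k+1))† A^k, where k = ind(A). -/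
open Matrix

def IsMoorePenrose {n : Type*} [Fintype n] [DecidableEq n]
    (M G : Matrix n n ℂ) : Prop :=
  M * G * M = M ∧ G * M * G = G ∧ (M * G)ᴴ = M * G ∧ (G * M)ᴴ = G * M

theorem drazin_via_moore_penrose {n : Type*} [Fintype n] [DecidableEq n]
    (A D G : Matrix n n ℂ) (k : ℕ) (hk : HasIndex A k)
    (hD : IsDrazinInverse A D k)
    (hG : IsMoorePenrose (A ^ (2 * k + 1)) G) :
    D = A ^ k * G * A ^ k := by
  obtain ⟨h1, h2, h3⟩ := hD
  have hc : Commute A D := h3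
  -- A^(k+j) * D^j = A^k
  have key1 : ∀ j, A ^ (k + j) * D ^ j = A ^ k := by
    intro j
    induction j with
    | zero => simp
    | succ j ih =>
        calc A ^ (k + (j + 1)) * D ^ (j + 1)
            = A ^ (k + j) * (A * D ^ j) * D := by
              rw [show k + (j + 1) = (k + j) + 1 from rfl, pow_succ, pow_succ]
              simp only [mul_assoc]
          _ = A ^ (k + j) * D ^ j * (A * D) := by
              rw [(hc.pow_right j).eq]; simp only [mul_assoc]
          _ = A ^ (k + 1) * D := by rw [ih, pow_succ, mul_assoc]
          _ = A ^ k := h1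
  -- D^(j+1) * A^j = D
  have key2 : ∀ j, D ^ (j + 1) * A ^ j = D := by
    intro j
    induction j with
    | zero => simp
    | succ j ih =>
        calc D ^ (j + 1 + 1) * A ^ (j + 1)
            = D ^ (j + 1) * (D * A ^ j) * A := by
              rw [pow_succ D (j + 1), pow_succ A j]
              simp only [mul_assoc]
          _ = D ^ (j + 1) * A ^ j * (D * A) := by
              rw [(hc.symm.pow_right j).eq]; simp only [mul_assoc]
          _ = D * (A * D) := by rw [ih, h3]
          _ = D := by rw [← mul_assoc]; exact h2
  have hM1 : A ^ (2 * k + 1) * D ^ (k + 1) = A ^ k := by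
    have := key1 (k + 1)
    rwa [show k + (k + 1) = 2 * k + 1 by ring] at this
  have hM2 : D ^ (k + 1) * A ^ (2 * k + 1) = A ^ k :=
    (hc.pow_pow (2 * k + 1) (k + 1)).eq.symm.trans hM1
  calc D = D ^ (k + 1) * A ^ k := (key2 k).symm
    _ = D ^ (k + 1) * (A ^ (2 * k + 1) * G * A ^ (2 * k + 1)) * D ^ (k + 1) := by
        rw [hG.1, mul_assoc, hM1]
    _ = (D ^ (k + 1) * A ^ (2 * k + 1)) * G * (A ^ (2 * k + 1) * D ^ (k + 1)) := by
        simp only [mul_assoc]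
    _ = A ^ k * G * A ^ k := by rw [hM1, hM2]
end

section
/- If ind(A) = 1, then the group inverse is given by A^# = A (A^3)^(1) A for any {1}-inverse (A^3)^(1) of A^3. -/
theorem group_inverse_via_one_inverse {n : Type*} [Fintype n] [DecidableEq n]
    (A X G : Matrix n n ℂ)
    (hX : IsGroupInverse A X)
    (hG : A ^ 3 * G * A ^ 3 = A ^ 3) :
    X = A * G * A := by
  obtain ⟨h1, h2, h3⟩ := hX
  have p3 : A ^ 3 = A * A * A := by rw [pow_succ, pow_succ, pow_one]
  rw [p3] at hG
  have hAAX : A * A * X = A := by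
    calc A * A * X = A * (A * X) := by rw [mul_assoc]
      _ = A * (X * A) := by rw [h3]
      _ = A * X * A := by rw [mul_assoc]
      _ = A := h1
  have hL : X * X * (A * A * A) = A := by
    calc X * X * (A * A * A) = X * (X * A) * (A * A) := by noncomm_ring
      _ = X * (A * X) * (A * A) := by rw [← h3]
      _ = (X * A * X) * (A * A) := by noncomm_ring
      _ = X * (A * A) := by rw [h2]
      _ = (X * A) * A := by rw [mul_assoc]
      _ = (A * X) * A := by rw [← h3]
      _ = A := h1
  have hR : (A * A * A) * (X * X) = A := by
    calc (A * A * A) * (X * X) = A * A * (A * X) * X := by noncomm_ring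
      _ = A * A * (X * A) * X := by rw [h3]
      _ = (A * A * X) * (A * X) := by noncomm_ring
      _ = A * (A * X) := by rw [hAAX]
      _ = A * (X * A) := by rw [h3]
      _ = (A * X) * A := by noncomm_ring
      _ = A := h1
  symm
  calc A * G * A = (X * X * (A * A * A)) * G * ((A * A * A) * (X * X)) := by
        rw [hL, hR]
    _ = X * X * (A * A * A * G * (A * A * A)) * (X * X) := by noncomm_ring
    _ = X * X * (A * A * A) * (X * X) := by rw [hG]
    _ = A * (X * X) := by rw [hL]
    _ = (A * X) * X := by rw [mul_assoc]
    _ = (X * A) * X := by rw [h3]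
    _ = X := h2
end
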